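/- Let Γ be a finite simplicial graph and x a vertex whose domination-equivalence class is the singleton {x}. Let C_0, C_1, …, C_r be the x-components, and suppose that π^x_{C_0} is not virtually obtained from dominated non-equivalent components. Then r ≥ 1, and there exists i ∈ {1,…,r} such that C_i is not a u-component for any vertex u with u ≤ x and u ≠ x. -/

import Mathlib

open SimpleGraph

namespace RaagPaper

/-- The star of a vertex: the vertex together with its neighbours. -/
def star {V : Type} (G : SimpleGraph V) (v : V) : Set V := insert v (G.neighborSet v)

/-- Domination: `u ≤ v` iff `lk(u) ⊆ st(v)`. -/
def Dom {V : Type} (G : SimpleGraph V) (u v : V) : Prop := G.neighborSet u ⊆ star G v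

/-- Domination-equivalence of vertices. -/
def EquivDom {V : Type} (G : SimpleGraph V) (u v : V) : Prop := Dom G u v ∧ Dom G v u

/-- The domination-equivalence class of a vertex. -/
def eqClass {V : Type} (G : SimpleGraph V) (x : V) : Set V := {v | EquivDom G v x}

/-- `C` is (the vertex set of) a connected component of the subgraph of `G` induced on `S`. -/
def IsCC {V : Type} (G : SimpleGraph V) (S : Set V) (C : Set V) : Prop :=
  ∃ v : S, C = {w : V | ∃ h : w ∈ S, (G.induce S).Reachable ⟨w, h⟩ v}

/-- `(x,y|z)` is a separating intersection of links (SIL). -/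
def IsSIL {V : Type} (G : SimpleGraph V) (x y z : V) : Prop :=
  x ≠ y ∧ x ≠ z ∧ y ≠ z ∧ ¬ G.Adj x y ∧ ¬ G.Adj x z ∧ ¬ G.Adj y z ∧
  ∀ C : Set V, IsCC G ((G.neighborSet x ∩ G.neighborSet y)ᶜ) C → z ∈ C → x ∉ C ∧ y ∉ C

/-- The graph has no SIL. -/
def HasNoSIL {V : Type} (G : SimpleGraph V) : Prop := ∀ x y z, ¬ IsSIL G x y z

/-- `D` is a (possibly empty) union of connected components of `Γ ∖ st(x)`. -/
def IsUnionCC {V : Type} (G : SimpleGraph V) (x : V) (D : Set V) : Prop :=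
  ∃ 𝒞 : Set (Set V), (∀ C ∈ 𝒞, IsCC G ((star G x)ᶜ) C) ∧ D = ⋃₀ 𝒞


/-- Defining relators of the RAAG: commutators of adjacent vertices. -/
def Rels {V : Type} (G : SimpleGraph V) : Set (FreeGroup V) :=
  {r | ∃ u v : V, G.Adj u v ∧
    r = FreeGroup.of u * FreeGroup.of v * (FreeGroup.of u)⁻¹ * (FreeGroup.of v)⁻¹}

/-- The right-angled Artin group on `G`. -/
abbrev Raag {V : Type} (G : SimpleGraph V) : Type := PresentedGroup (Rels G)

/-- The generator of `Raag G` corresponding to a vertex. -/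
def gen {V : Type} (G : SimpleGraph V) (v : V) : Raag G := PresentedGroup.of v

/-- `φ` is the partial conjugation conjugating the vertices of `C` by `x`. -/
def IsPartialConj {V : Type} (G : SimpleGraph V) (x : V) (C : Set V)
    (φ : MulAut (Raag G)) : Prop :=
  (∀ v ∈ C, φ (gen G v) = (gen G x)⁻¹ * gen G v * gen G x) ∧
  (∀ v ∉ C, φ (gen G v) = gen G v)

/-- `φ` is the transvection `R_u^v`, sending `u ↦ uv` and fixing all other vertices. -/
def IsTransvection {V : Type} (G : SimpleGraph V) (u v : V)
    (φ : MulAut (Raag G)) : Prop :=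
  φ (gen G u) = gen G u * gen G v ∧ ∀ w : V, w ≠ u → φ (gen G w) = gen G w

/-- The subgroup of inner automorphisms of a group. -/
def Inn (H : Type*) [Group H] : Subgroup (MulAut H) := (MulAut.conj : H →* MulAut H).range

instance Inn.normal (H : Type*) [Group H] : (Inn H).Normal := by
  constructor
  rintro a ⟨g, rfl⟩ f
  refine ⟨f g, ?_⟩
  ext x
  simp [MulAut.conj_apply, map_mul, map_inv]

/-- The outer automorphism group. -/
abbrev Out (H : Type*) [Group H] : Type _ := MulAut H ⧸ Inn H

/-- Projection from automorphisms to outer automorphisms. -/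
def toOut (H : Type*) [Group H] : MulAut H →* Out H := QuotientGroup.mk' (Inn H)

/-- The homomorphism sending an automorphism to the induced automorphism of the
abelianization. -/
def abAut (H : Type*) [Group H] : MulAut H →* MulAut (Abelianization H) where
  toFun e := MulEquiv.abelianizationCongr e
  map_one' := by
    apply MulEquiv.toMonoidHom_injective
    apply Abelianization.hom_ext
    ext x
    simp [abelianizationCongr_of]
  map_mul' f g := by
    apply MulEquiv.toMonoidHom_injective
    apply Abelianization.hom_ext
    ext x
    simp [abelianizationCongr_of, MulAut.mul_apply]

lemma abAut_inn (H : Type*) [Group H] : ∀ a ∈ Inn H, abAut H a = 1 := by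
  rintro a ⟨g, rfl⟩
  apply MulEquiv.toMonoidHom_injective
  apply Abelianization.hom_ext
  ext x
  simp [abAut, abelianizationCongr_of, MulAut.conj_apply, mul_comm]

/-- The standard map `ρ : Out(H) → Aut(Hᵃᵇ)` induced by acting on the abelianization. -/
def rhoOut (H : Type*) [Group H] : Out H →* MulAut (Abelianization H) :=
  QuotientGroup.lift (Inn H) (abAut H) (abAut_inn H)

end RaagPaper

namespace RaagPaper

/-- Auxiliary definition: some nonzero power of `π^x_C` can be written in `Out(A_Γ)` as a
product of partial conjugations (or their inverses) with multiplier `x` whose supports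
are `y_i`-components for vertices `y_i` satisfying the predicate `P`. -/
def VirtObtAux {V : Type} (G : SimpleGraph V) (x : V) (C : Set V) (P : V → Prop) : Prop :=
  ∃ n : ℤ, n ≠ 0 ∧
    ∃ (m : ℕ) (y : Fin m → V) (D : Fin m → Set V) (ε : Fin m → ℤ)
      (φ : MulAut (Raag G)) (ψ : Fin m → MulAut (Raag G)),
      (∀ i, P (y i)) ∧
      (∀ i, IsCC G ((star G (y i))ᶜ) (D i)) ∧
      (∀ i, ε i = 1 ∨ ε i = -1) ∧
      IsPartialConj G x C φ ∧
      (∀ i, IsPartialConj G x (D i) (ψ i)) ∧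
      (toOut (Raag G) φ) ^ n
        = (List.ofFn fun i => (toOut (Raag G) (ψ i)) ^ (ε i)).prod

/-- `π^x_C` is virtually obtained from dominated components. -/
def VirtObtDom {V : Type} (G : SimpleGraph V) (x : V) (C : Set V) : Prop :=
  VirtObtAux G x C (fun y => Dom G y x ∧ y ≠ x)

/-- `π^x_C` is virtually obtained from dominated non-equivalent components. -/
def VirtObtNE {V : Type} (G : SimpleGraph V) (x : V) (C : Set V) : Prop :=
  VirtObtAux G x C (fun y => Dom G y x ∧ ¬ EquivDom G y x)

/-- The pair `(X,C)`, of an equivalence class and an `X`-component, is non-principal. -/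
def NonPrincipal {V : Type} (G : SimpleGraph V) (X C : Set V) : Prop :=
  ∀ x ∈ X, IsCC G ((star G x)ᶜ) C → VirtObtNE G x C

/-- The pair `(X,C)` is principal. -/
def Principal {V : Type} (G : SimpleGraph V) (X C : Set V) : Prop :=
  ¬ NonPrincipal G X C

/-- Condition (A2'): every principal pair `(X,C)` has `|X| > 1`. -/
def CondA2' {V : Type} (G : SimpleGraph V) : Prop :=
  ∀ X C : Set V, (∃ x : V, X = eqClass G x) → (∃ x ∈ X, IsCC G ((star G x)ᶜ) C) →
    Principal G X C → X.Nontrivial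

end RaagPaper

namespace RaagPaper

section Aux

variable {V : Type} {G : SimpleGraph V}

lemma gen_comm (G : SimpleGraph V) {u v : V} (h : G.Adj u v) :
    Commute (gen G u) (gen G v) := by
  have hr : (FreeGroup.of u * FreeGroup.of v * (FreeGroup.of u)⁻¹ * (FreeGroup.of v)⁻¹) ∈
      Subgroup.normalClosure (Rels G) :=
    Subgroup.subset_normalClosure ⟨u, v, h, rfl⟩
  have h1 : PresentedGroup.mk (Rels G)
      (FreeGroup.of u * FreeGroup.of v * (FreeGroup.of u)⁻¹ * (FreeGroup.of v)⁻¹) = 1 :=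
    (QuotientGroup.eq_one_iff _).mpr hr
  have h2 : gen G u * gen G v * (gen G u)⁻¹ * (gen G v)⁻¹ = 1 := by
    simpa [gen, PresentedGroup.of, map_mul, map_inv] using h1
  exact commutatorElement_eq_one_iff_commute.mp (by simpa [commutatorElement_def] using h2)

lemma mem_star_iff {x v : V} : v ∈ star G x ↔ v = x ∨ G.Adj x v := by
  simp [star, Set.mem_insert_iff]

lemma aut_ext {φ ψ : MulAut (Raag G)} (h : ∀ v, φ (gen G v) = ψ (gen G v)) : φ = ψ :=
  MulEquiv.toMonoidHom_injective (PresentedGroup.ext h)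

lemma exists_partialConj (G : SimpleGraph V) (x : V) (D : Set V)
    (hD1 : ∀ v ∈ D, v ∉ star G x)
    (hD2 : ∀ u ∈ D, ∀ v, G.Adj u v → v ∉ D → G.Adj x v) :
    ∃ φ : MulAut (Raag G), IsPartialConj G x D φ := by
  classical
  have hxD : x ∉ D := fun hx => hD1 x hx (Set.mem_insert _ _)
  have key : ∀ (c : Raag G), (∀ v, G.Adj x v → Commute c (gen G v)) →
      ∀ r ∈ Rels G,
        FreeGroup.lift (fun v => if v ∈ D then c⁻¹ * gen G v * c else gen G v) r = 1 := by
    intro c hc r hr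
    obtain ⟨u, v, huv, rfl⟩ := hr
    set f : V → Raag G := fun v => if v ∈ D then c⁻¹ * gen G v * c else gen G v with hf
    have guv : Commute (gen G u) (gen G v) := gen_comm G huv
    have hcomm : Commute (f u) (f v) := by
      by_cases hu : u ∈ D <;> by_cases hv : v ∈ D <;>
        simp only [hf, if_pos, if_neg, hu, hv, if_true, if_false]
      · have e1 : (c⁻¹ * gen G u * c) * (c⁻¹ * gen G v * c)
            = c⁻¹ * (gen G u * gen G v) * c := by group
        have e2 : (c⁻¹ * gen G v * c) * (c⁻¹ * gen G u * c)
            = c⁻¹ * (gen G v * gen G u) * c := by group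
        unfold Commute SemiconjBy
        rw [e1, e2, guv.eq]
      · have hcv : Commute c (gen G v) := hc v (hD2 u hu v huv hv)
        exact ((hcv.inv_left.symm.mul_right guv.symm).mul_right hcv.symm).symm
      · have hcu : Commute c (gen G u) := hc u (hD2 v hv u huv.symm hu)
        exact (hcu.inv_left.symm.mul_right guv).mul_right hcu.symm
      · exact guv
    have : FreeGroup.lift f
        (FreeGroup.of u * FreeGroup.of v * (FreeGroup.of u)⁻¹ * (FreeGroup.of v)⁻¹)
        = f u * f v * (f u)⁻¹ * (f v)⁻¹ := by
      simp [map_mul, map_inv]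
    rw [this]
    simpa [commutatorElement_def] using commutatorElement_eq_one_iff_commute.mpr hcomm
  have ha : ∀ v, G.Adj x v → Commute (gen G x) (gen G v) := fun v hv => gen_comm G hv
  have hai : ∀ v, G.Adj x v → Commute (gen G x)⁻¹ (gen G v) :=
    fun v hv => (gen_comm G hv).inv_left
  set F : Raag G →* Raag G := PresentedGroup.toGroup (key (gen G x) ha)
  set Gh : Raag G →* Raag G := PresentedGroup.toGroup (key (gen G x)⁻¹ hai)
  have hFof : ∀ v, F (gen G v)
      = if v ∈ D then (gen G x)⁻¹ * gen G v * gen G x else gen G v := by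
    intro v; exact PresentedGroup.toGroup.of _
  have hGof : ∀ v, Gh (gen G v)
      = if v ∈ D then gen G x * gen G v * (gen G x)⁻¹ else gen G v := by
    intro v
    show Gh (PresentedGroup.of v) = _
    rw [show Gh (PresentedGroup.of v)
        = if v ∈ D then ((gen G x)⁻¹)⁻¹ * gen G v * (gen G x)⁻¹ else gen G v from
      PresentedGroup.toGroup.of _, inv_inv]
  have hGx : Gh (gen G x) = gen G x := by rw [hGof, if_neg hxD]
  have hFx : F (gen G x) = gen G x := by rw [hFof, if_neg hxD]
  have h1 : Gh.comp F = MonoidHom.id (Raag G) := by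
    apply PresentedGroup.ext
    intro v
    show Gh (F (gen G v)) = gen G v
    rw [hFof]
    by_cases hv : v ∈ D
    · rw [if_pos hv, map_mul, map_mul, map_inv, hGx, hGof, if_pos hv]
      group
    · rw [if_neg hv, hGof, if_neg hv]
  have h2 : F.comp Gh = MonoidHom.id (Raag G) := by
    apply PresentedGroup.ext
    intro v
    show F (Gh (gen G v)) = gen G v
    rw [hGof]
    by_cases hv : v ∈ D
    · rw [if_pos hv, map_mul, map_mul, map_inv, hFx, hFof, if_pos hv]
      group
    · rw [if_neg hv, hFof, if_neg hv]
  refine ⟨MonoidHom.toMulEquiv F Gh h1 h2, ?_, ?_⟩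
  · intro v hv
    show F (gen G v) = _
    rw [hFof, if_pos hv]
  · intro v hv
    show F (gen G v) = _
    rw [hFof, if_neg hv]

end Aux

end RaagPaper

namespace RaagPaper

section Aux2

variable {V : Type} {G : SimpleGraph V}

lemma isCC_subset {S C : Set V} (h : IsCC G S C) : C ⊆ S := by
  obtain ⟨p, rfl⟩ := h
  rintro w ⟨hw, -⟩
  exact hw

lemma isCC_eq_of_mem {S C C' : Set V} (h : IsCC G S C) (h' : IsCC G S C')
    {w : V} (hw : w ∈ C) (hw' : w ∈ C') : C = C' := by
  obtain ⟨p, rfl⟩ := h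
  obtain ⟨q, rfl⟩ := h'
  obtain ⟨hwS, hwp⟩ := hw
  obtain ⟨hwS', hwq⟩ := hw'
  have hpq : (G.induce S).Reachable p q := hwp.symm.trans hwq
  ext z
  exact ⟨fun ⟨hz, hzp⟩ => ⟨hz, hzp.trans hpq⟩, fun ⟨hz, hzq⟩ => ⟨hz, hzq.trans hpq.symm⟩⟩

lemma exists_mem_CC {S : Set V} {v : V} (hv : v ∈ S) :
    ∃ Cv : Set V, IsCC G S Cv ∧ v ∈ Cv :=
  ⟨_, ⟨⟨v, hv⟩, rfl⟩, ⟨hv, SimpleGraph.Reachable.refl _⟩⟩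

lemma isCC_adj {S C : Set V} (h : IsCC G S C) {u v : V} (hu : u ∈ C) (hvS : v ∈ S)
    (hadj : G.Adj u v) : v ∈ C := by
  obtain ⟨p, rfl⟩ := h
  obtain ⟨huS, hup⟩ := hu
  refine ⟨hvS, ?_⟩
  have hA : (G.induce S).Adj ⟨v, hvS⟩ ⟨u, huS⟩ := by
    simpa using hadj.symm
  exact hA.reachable.trans hup

lemma isCC_good {x : V} {C : Set V} (h : IsCC G ((star G x)ᶜ) C) :
    (∀ v ∈ C, v ∉ star G x) ∧ ∀ u ∈ C, ∀ v, G.Adj u v → v ∉ C → G.Adj x v := by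
  have hsub := isCC_subset h
  refine ⟨fun v hv => hsub hv, ?_⟩
  intro u hu v hadj hv
  by_contra hxv
  have hvS : v ∈ (star G x)ᶜ := by
    intro hvs
    rcases mem_star_iff.mp hvs with rfl | hxv'
    · exact (hsub hu) (mem_star_iff.mpr (Or.inr hadj.symm))
    · exact hxv hxv'
  exact hv (isCC_adj h hu hvS hadj)

lemma listprod_fix {H : Type*} [Group H] :
    ∀ (L : List (MulAut H)) (a : H), (∀ ψ ∈ L, ψ a = a) → L.prod a = a := by
  intro L
  induction L with
  | nil => intro a _; simp
  | cons ψ L ih =>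
    intro a hfix
    rw [List.prod_cons, MulAut.mul_apply,
      ih a (fun χ hχ => hfix χ (List.mem_cons_of_mem _ hχ))]
    exact hfix ψ List.mem_cons_self

lemma ofFn_prod_apply {H : Type*} [Group H] :
    ∀ (n : ℕ) (f : Fin n → MulAut H) (a b : H) (j : Fin n),
      f j a = b → (∀ i, i < j → f i b = b) → (∀ i, j < i → f i a = a) →
      (List.ofFn f).prod a = b := by
  intro n
  induction n with
  | zero => intro f a b j; exact j.elim0
  | succ n ih =>
    intro f a b j hj h1 h2
    rw [List.ofFn_succ, List.prod_cons, MulAut.mul_apply]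
    rcases Fin.eq_zero_or_eq_succ j with rfl | ⟨k, rfl⟩
    · rw [listprod_fix _ a ?_]
      · exact hj
      · intro ψ hψ
        rw [List.mem_ofFn] at hψ
        obtain ⟨i, rfl⟩ := hψ
        exact h2 i.succ (Fin.succ_pos i)
    · rw [ih (fun i => f i.succ) a b k hj
        (fun i hi => h1 i.succ (Fin.succ_lt_succ_iff.mpr hi))
        (fun i hi => h2 i.succ (Fin.succ_lt_succ_iff.mpr hi))]
      exact h1 0 (Fin.succ_pos k)

lemma ofFn_prod_inv {H : Type*} [Group H] :
    ∀ (n : ℕ) (g : Fin n → H),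
      ((List.ofFn g).prod)⁻¹ = (List.ofFn fun i => (g i.rev)⁻¹).prod := by
  intro n
  induction n with
  | zero => intro g; simp
  | succ n ih =>
    intro g
    have hrev : ∀ i : Fin n, (Fin.castSucc i).rev = (Fin.rev i).succ := by
      intro i
      ext
      simp [Fin.val_rev]
      omega
    rw [List.ofFn_succ, List.prod_cons, mul_inv_rev, ih (fun i => g i.succ)]
    conv_rhs => rw [List.ofFn_succ' (fun i : Fin (n+1) => (g i.rev)⁻¹)]
    rw [List.prod_concat, Fin.rev_last]
    have hfun : (fun i : Fin n => (g i.castSucc.rev)⁻¹) = fun i => (g i.rev.succ)⁻¹ := by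
      funext i
      rw [hrev]
    rw [hfun]

lemma master_eq (G : SimpleGraph V) (x : V) (r : ℕ) (C : Fin (r+1) → Set V)
    (hC : ∀ i, IsCC G ((star G x)ᶜ) (C i)) (hinj : Function.Injective C)
    (hall : ∀ S : Set V, IsCC G ((star G x)ᶜ) S → ∃ i, S = C i)
    (π : Fin (r+1) → MulAut (Raag G)) (hπ : ∀ i, IsPartialConj G x (C i) (π i)) :
    (List.ofFn π).prod = MulAut.conj ((gen G x)⁻¹) := by
  apply aut_ext
  intro v
  have target : (MulAut.conj ((gen G x)⁻¹)) (gen G v)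
      = (gen G x)⁻¹ * gen G v * gen G x := by
    simp [MulAut.conj_apply]
  rw [target]
  by_cases hv : v ∈ star G x
  · have fixv : (List.ofFn π).prod (gen G v) = gen G v := by
      apply listprod_fix
      intro ψ hψ
      rw [List.mem_ofFn] at hψ
      obtain ⟨i, rfl⟩ := hψ
      exact (hπ i).2 v (fun hvC => (isCC_good (hC i)).1 v hvC hv)
    rw [fixv]
    rcases mem_star_iff.mp hv with rfl | hxv
    · group
    · rw [mul_assoc, ← (gen_comm G hxv).eq, inv_mul_cancel_left]
  · obtain ⟨Cv, hCv, hvCv⟩ := exists_mem_CC (G := G) (S := (star G x)ᶜ) hv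
    obtain ⟨j, hj⟩ := hall Cv hCv
    subst hj
    have hnot : ∀ i, i ≠ j → v ∉ C i := by
      intro i hij hvi
      exact hij (hinj (isCC_eq_of_mem (hC i) (hC j) hvi hvCv))
    have hxfix : ∀ i, (π i) (gen G x) = gen G x :=
      fun i => (hπ i).2 x (fun hxC => (isCC_good (hC i)).1 x hxC (Set.mem_insert _ _))
    have hfixb : ∀ i, i ≠ j →
        (π i) ((gen G x)⁻¹ * gen G v * gen G x) = (gen G x)⁻¹ * gen G v * gen G x := by
      intro i hij
      rw [map_mul, map_mul, map_inv, hxfix i, (hπ i).2 v (hnot i hij)]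
    exact ofFn_prod_apply (r+1) π (gen G v) _ j ((hπ j).1 v hvCv)
      (fun i hi => hfixb i (ne_of_lt hi))
      (fun i hi => (hπ i).2 v (hnot i (ne_of_gt hi)))

end Aux2

end RaagPaper

open RaagPaper in
/-- If the equivalence class of `x` is `{x}`, `C_0,…,C_r` are the
`x`-components and `π^x_{C_0}` is not virtually obtained from dominated non-equivalent
components, then `r ≥ 1` and some `C_i` (`i ≠ 0`) is not a `u`-component for any `u` with
`u ≤ x`, `u ≠ x`. -/
theorem statement19 {V : Type} [Fintype V] (G : SimpleGraph V) (x : V)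
    (hx : eqClass G x = {x})
    (r : ℕ) (C : Fin (r + 1) → Set V)
    (hC : ∀ i, IsCC G ((star G x)ᶜ) (C i))
    (hinj : Function.Injective C)
    (hall : ∀ S : Set V, IsCC G ((star G x)ᶜ) S → ∃ i, S = C i)
    (h : ¬ VirtObtNE G x (C 0)) :
    1 ≤ r ∧ ∃ i : Fin (r + 1), i ≠ 0 ∧
      ∀ u : V, Dom G u x → u ≠ x → ¬ IsCC G ((star G u)ᶜ) (C i) := by
  have hgood := fun i => isCC_good (hC i)
  have hπex : ∀ i, ∃ φ : MulAut (Raag G), IsPartialConj G x (C i) φ :=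
    fun i => exists_partialConj G x (C i) (hgood i).1 (hgood i).2
  choose π hπ using hπex
  have hmaster := master_eq G x r C hC hinj hall π hπ
  set t : Fin (r+1) → Out (Raag G) := fun i => toOut (Raag G) (π i) with ht
  have hprod1 : (List.ofFn t).prod = 1 := by
    have hmap : List.ofFn t = (List.ofFn π).map (toOut (Raag G)) := by
      rw [List.map_ofFn]; rfl
    rw [hmap, ← map_list_prod, hmaster]
    exact (QuotientGroup.eq_one_iff _).mpr ⟨(gen G x)⁻¹, rfl⟩
  have key : t 0 = (List.ofFn fun i : Fin r => (t (Fin.succ i.rev))⁻¹).prod := by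
    rw [List.ofFn_succ, List.prod_cons] at hprod1
    have h0 : t 0 = ((List.ofFn fun i : Fin r => t i.succ).prod)⁻¹ :=
      eq_inv_of_mul_eq_one_left hprod1
    rw [h0, ofFn_prod_inv]
  constructor
  · by_contra hr
    obtain rfl : r = 0 := by omega
    apply h
    refine ⟨1, one_ne_zero, 0, Fin.elim0, Fin.elim0, Fin.elim0, π 0, Fin.elim0,
      fun i => i.elim0, fun i => i.elim0, fun i => i.elim0, hπ 0, fun i => i.elim0, ?_⟩
    rw [zpow_one]
    have : t 0 = 1 := by simpa using key
    simpa using this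
  · by_contra hne
    push_neg at hne
    choose u hu1 hu2 hu3 using hne
    apply h
    refine ⟨1, one_ne_zero, r, fun i => u (Fin.succ i.rev) (Fin.succ_ne_zero _),
      fun i => C (Fin.succ i.rev), fun _ => (-1 : ℤ), π 0, fun i => π (Fin.succ i.rev),
      ?_, fun i => hu3 _ _, fun i => Or.inr rfl, hπ 0, fun i => hπ _, ?_⟩
    · intro i
      refine ⟨hu1 (Fin.succ i.rev) (Fin.succ_ne_zero _), fun hEq => hu2 (Fin.succ i.rev) (Fin.succ_ne_zero _) ?_⟩
      have hmem : u (Fin.succ i.rev) (Fin.succ_ne_zero _) ∈ eqClass G x := hEq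
      rw [hx] at hmem
      exact hmem
    · rw [zpow_one]
      have hzp : (List.ofFn fun i : Fin r =>
            (toOut (Raag G) (π (Fin.succ i.rev))) ^ (-1 : ℤ))
          = List.ofFn fun i : Fin r => (t (Fin.succ i.rev))⁻¹ := by
        have : (fun i : Fin r => (toOut (Raag G) (π (Fin.succ i.rev))) ^ (-1 : ℤ))
            = fun i : Fin r => (t (Fin.succ i.rev))⁻¹ := by
          funext i
          rw [zpow_neg_one]
        rw [this]
      rw [hzp]
      exact key
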